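/- arXiv:2512.10188 — 2 statements merged into one kernel-verified Lean document; each statement's English description precedes it below -/
import Mathlib

section
/- Let X be an n×d real matrix, Y ∈ ℝⁿ, 𝕏 = XᵀX, and let X⁺ denote the Moore–Penrose pseudo-inverse of X. Let step-sizes α_k > 0 satisfy sup_ℓ α_ℓ·‖𝕏‖ < 1, and define the gradient descent iterates w_{k+1} = (I − α_k·𝕏) w_k + α_k·Xᵀ Y. If the initialization w₁ is orthogonal to ker(X), then for every k ≥ 1, ‖w_{k+1} − X⁺Y‖₂ ≤ exp(− σ⁺min(𝕏) · Σ_{ℓ=1}^k α_ℓ) · ‖w₁ − X⁺Y‖₂, where σ⁺min(𝕏) denotes the smallest non-zero singular value of 𝕏. In particular, if Σ_{ℓ=1}^∞ α_ℓ = ∞, then ‖w_k − X⁺Y‖₂ → 0 as k → ∞. -/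
open Matrix MeasureTheory ProbabilityTheory Filter
open scoped BigOperators

noncomputable section

/-- Euclidean norm of a vector in `Fin n → ℝ`. -/
def l2norm {n : ℕ} (v : Fin n → ℝ) : ℝ := Real.sqrt (∑ i, (v i) ^ 2)

/-- Spectral norm (ℓ²-operator norm) of a real matrix. -/
def specNorm {m n : ℕ} (A : Matrix (Fin m) (Fin n) ℝ) : ℝ :=
  sSup {c : ℝ | ∃ v : Fin n → ℝ, l2norm v = 1 ∧ c = l2norm (A *ᵥ v)}

/-- The smallest non-zero singular value of a real matrix:
the infimum of all positive `s` such that `s ^ 2` is an eigenvalue of `AᵀA`. -/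
def sigmaMinPos {m n : ℕ} (A : Matrix (Fin m) (Fin n) ℝ) : ℝ :=
  sInf {s : ℝ | 0 < s ∧ ∃ v : Fin n → ℝ, v ≠ 0 ∧ (Aᵀ * A) *ᵥ v = (s ^ 2) • v}

/-- `B` is the Moore–Penrose pseudo-inverse of `A` (the four Penrose conditions). -/
def IsMoorePenrose {m n : ℕ} (A : Matrix (Fin m) (Fin n) ℝ)
    (B : Matrix (Fin n) (Fin m) ℝ) : Prop :=
  A * B * A = A ∧ B * A * B = B ∧ (A * B)ᵀ = A * B ∧ (B * A)ᵀ = B * A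

/-- `w` lies in the orthogonal complement of `ker A`. -/
def perpKer {m n : ℕ} (A : Matrix (Fin m) (Fin n) ℝ) (w : Fin n → ℝ) : Prop :=
  ∀ v : Fin n → ℝ, A *ᵥ v = 0 → w ⬝ᵥ v = 0

/-- Entrywise expectation of a random matrix. -/
def matExp {Ω : Type*} [MeasurableSpace Ω] (μ : Measure Ω) {m n : ℕ}
    (M : Ω → Matrix (Fin m) (Fin n) ℝ) : Matrix (Fin m) (Fin n) ℝ :=
  Matrix.of fun i j => ∫ ω, M ω i j ∂μ

/-- Entrywise expectation of a random vector. -/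
def vecExp {Ω : Type*} [MeasurableSpace Ω] (μ : Measure Ω) {n : ℕ}
    (v : Ω → Fin n → ℝ) : Fin n → ℝ :=
  fun i => ∫ ω, v ω i ∂μ

lemma l2norm_eq {d : ℕ} (v : Fin d → ℝ) :
    l2norm v = ‖(WithLp.equiv 2 (Fin d → ℝ)).symm v‖ := by
  rw [EuclideanSpace.norm_eq, l2norm]
  congr 1
  exact Finset.sum_congr rfl fun i _ => by rw [Real.norm_eq_abs, sq_abs]; rfl

lemma l2norm_nonneg {d : ℕ} (v : Fin d → ℝ) : 0 ≤ l2norm v := Real.sqrt_nonneg _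

lemma l2norm_eq_zero {d : ℕ} {v : Fin d → ℝ} (h : l2norm v = 0) : v = 0 := by
  rw [l2norm_eq] at h
  have := norm_eq_zero.mp h
  simpa [WithLp.equiv] using congrArg (WithLp.equiv 2 (Fin d → ℝ)) this

lemma l2norm_smul {d : ℕ} (c : ℝ) (v : Fin d → ℝ) : l2norm (c • v) = |c| * l2norm v := by
  unfold l2norm
  have : ∀ i, ((c • v) i)^2 = c^2 * (v i)^2 := by intro i; simp [mul_pow]
  simp_rw [this, ← Finset.mul_sum]
  rw [Real.sqrt_mul (sq_nonneg c), Real.sqrt_sq_eq_abs]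

lemma parseval {d : ℕ} (b : OrthonormalBasis (Fin d) ℝ (EuclideanSpace ℝ (Fin d)))
    (x : Fin d → ℝ) :
    l2norm x = Real.sqrt (∑ i, ((b i : Fin d → ℝ) ⬝ᵥ x) ^ 2) := by
  rw [l2norm_eq]
  set X' : EuclideanSpace ℝ (Fin d) := (WithLp.equiv 2 (Fin d → ℝ)).symm x with hX'
  rw [← b.repr.norm_map X', EuclideanSpace.norm_eq]
  congr 1
  refine Finset.sum_congr rfl fun i _ => ?_
  rw [Real.norm_eq_abs, sq_abs, b.repr_apply_apply]
  congr 1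
  show x ⬝ᵥ star (WithLp.ofLp (b i)) = _
  rw [star_trivial, dotProduct_comm]

lemma specNorm_bddAbove {m' n' : ℕ} (A : Matrix (Fin m') (Fin n') ℝ) :
    BddAbove {c : ℝ | ∃ v : Fin n' → ℝ, l2norm v = 1 ∧ c = l2norm (A *ᵥ v)} := by
  refine ⟨Real.sqrt (∑ i, ∑ j, (A i j)^2), ?_⟩
  rintro c ⟨v, hv, rfl⟩
  have hvsum : ∑ j, (v j)^2 = 1 := by
    have h0 : (0:ℝ) ≤ ∑ j, (v j)^2 := Finset.sum_nonneg fun j _ => sq_nonneg _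
    have := congrArg (fun t => t^2) hv
    simpa [l2norm, Real.sq_sqrt h0] using this
  unfold l2norm
  apply Real.sqrt_le_sqrt
  calc ∑ i, ((A *ᵥ v) i)^2 ≤ ∑ i, (∑ j, (A i j)^2) * (∑ j, (v j)^2) := by
        refine Finset.sum_le_sum fun i _ => ?_
        simpa [Matrix.mulVec, dotProduct] using
          Finset.sum_mul_sq_le_sq_mul_sq Finset.univ (fun j => A i j) v
    _ = ∑ i, ∑ j, (A i j)^2 := by simp [hvsum]

lemma le_specNorm {m' n' : ℕ} (A : Matrix (Fin m') (Fin n') ℝ) {v : Fin n' → ℝ}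
    (hv : l2norm v = 1) : l2norm (A *ᵥ v) ≤ specNorm A :=
  le_csSup (specNorm_bddAbove A) ⟨v, hv, rfl⟩

lemma sigmaMinPos_le {m' n' : ℕ} (A : Matrix (Fin m') (Fin n') ℝ) {s : ℝ}
    (hs : 0 < s) (h : ∃ v : Fin n' → ℝ, v ≠ 0 ∧ (Aᵀ * A) *ᵥ v = (s ^ 2) • v) :
    sigmaMinPos A ≤ s :=
  csInf_le ⟨0, fun t ht => ht.1.le⟩ ⟨hs, h⟩

section step
variable {n d : ℕ} (X : Matrix (Fin n) (Fin d) ℝ)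

lemma hAT : (Xᵀ * X)ᵀ = Xᵀ * X := by rw [Matrix.transpose_mul, Matrix.transpose_transpose]

lemma dot_symm_A (v w : Fin d → ℝ) : v ⬝ᵥ ((Xᵀ * X) *ᵥ w) = ((Xᵀ * X) *ᵥ v) ⬝ᵥ w := by
  rw [Matrix.dotProduct_mulVec, ← Matrix.vecMul_transpose, hAT, dotProduct_comm]

lemma dot_A_self (v : Fin d → ℝ) : v ⬝ᵥ ((Xᵀ * X) *ᵥ v) = (X *ᵥ v) ⬝ᵥ (X *ᵥ v) := by
  rw [← Matrix.mulVec_mulVec, Matrix.dotProduct_mulVec, Matrix.vecMul_transpose]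

lemma ker_of_A {v : Fin d → ℝ} (h : (Xᵀ * X) *ᵥ v = 0) : X *ᵥ v = 0 := by
  have h2 : (X *ᵥ v) ⬝ᵥ (X *ᵥ v) = 0 := by rw [← dot_A_self, h, dotProduct_zero]
  exact dotProduct_self_eq_zero.mp h2

lemma perp_step {a : ℝ} {e : Fin d → ℝ} (he : perpKer X e) :
    perpKer X (((1 : Matrix (Fin d) (Fin d) ℝ) - a • (Xᵀ * X)) *ᵥ e) := by
  intro v hv
  have hAv : (Xᵀ * X) *ᵥ v = 0 := by
    rw [← Matrix.mulVec_mulVec, hv, Matrix.mulVec_zero]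
  rw [Matrix.sub_mulVec, Matrix.one_mulVec, Matrix.smul_mulVec, sub_dotProduct,
    smul_dotProduct, dot_symm_A X e v |>.symm, hAv, dotProduct_zero, he v hv]
  simp

lemma key_step {a c : ℝ}
    (ha : 0 < a) (hc : c < 1) (hac : a * specNorm (Xᵀ * X) ≤ c)
    {e : Fin d → ℝ} (he : perpKer X e) :
    l2norm (((1 : Matrix (Fin d) (Fin d) ℝ) - a • (Xᵀ * X)) *ᵥ e)
      ≤ Real.exp (-(sigmaMinPos (Xᵀ * X)) * a) * l2norm e := by
  have hherm : (Xᵀ * X).IsHermitian := by simpa using isHermitian_conjTranspose_mul_self X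
  set b := hherm.eigenvectorBasis with hb
  set lam := hherm.eigenvalues with hlam
  set σ := sigmaMinPos (Xᵀ * X) with hσ
  set E := Real.exp (-σ * a) with hE
  have hEpos : 0 < E := Real.exp_pos _
  set f := ((1 : Matrix (Fin d) (Fin d) ℝ) - a • (Xᵀ * X)) *ᵥ e with hf
  have heig : ∀ i, (Xᵀ * X) *ᵥ (b i : Fin d → ℝ) = lam i • (b i : Fin d → ℝ) :=
    fun i => hherm.mulVec_eigenvectorBasis i
  have hbnorm : ∀ i, l2norm (b i : Fin d → ℝ) = 1 := by
    intro i
    rw [l2norm_eq]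
    have : ‖b i‖ = 1 := b.orthonormal.1 i
    rw [← this]
    rfl
  have hbdot : ∀ i, (b i : Fin d → ℝ) ⬝ᵥ (b i : Fin d → ℝ) = 1 := by
    intro i
    have h0 : (0:ℝ) ≤ ∑ j, ((b i : Fin d → ℝ) j)^2 := Finset.sum_nonneg fun j _ => sq_nonneg _
    have := congrArg (fun t => t^2) (hbnorm i)
    simp only [l2norm, Real.sq_sqrt h0, one_pow] at this
    simpa [dotProduct, sq] using this
  have hlam_nonneg : ∀ i, 0 ≤ lam i := by
    intro i
    have h1 : (b i : Fin d → ℝ) ⬝ᵥ ((Xᵀ * X) *ᵥ (b i : Fin d → ℝ)) = lam i := by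
      rw [heig i, dotProduct_smul, hbdot i]; simp
    rw [← h1, dot_A_self]
    exact Finset.sum_nonneg fun j _ => mul_self_nonneg _
  -- coordinates of f
  have hcoord : ∀ i, (b i : Fin d → ℝ) ⬝ᵥ f
      = (1 - a * lam i) * ((b i : Fin d → ℝ) ⬝ᵥ e) := by
    intro i
    rw [hf, Matrix.sub_mulVec, Matrix.one_mulVec, Matrix.smul_mulVec, dotProduct_sub,
      dotProduct_smul, dot_symm_A X _ e, heig i, smul_dotProduct]
    ring_nf
  have hterm : ∀ i, ((1 - a * lam i) * ((b i : Fin d → ℝ) ⬝ᵥ e))^2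
      ≤ E^2 * ((b i : Fin d → ℝ) ⬝ᵥ e)^2 := by
    intro i
    by_cases hci : (b i : Fin d → ℝ) ⬝ᵥ e = 0
    · simp [hci]
    · have hlam_pos : 0 < lam i := by
        rcases lt_or_eq_of_le (hlam_nonneg i) with h | h
        · exact h
        · exfalso
          have hA0 : (Xᵀ * X) *ᵥ (b i : Fin d → ℝ) = 0 := by rw [heig i, ← h]; simp
          have hX0 : X *ᵥ (b i : Fin d → ℝ) = 0 := ker_of_A X hA0
          exact hci (by rw [dotProduct_comm]; exact he _ hX0)
      have hble : lam i ≤ specNorm (Xᵀ * X) := by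
        have : l2norm ((Xᵀ * X) *ᵥ (b i : Fin d → ℝ)) = lam i := by
          rw [heig i, l2norm_smul, hbnorm i, abs_of_nonneg (hlam_nonneg i), mul_one]
        rw [← this]
        exact le_specNorm _ (hbnorm i)
      have hσle : σ ≤ lam i := by
        refine sigmaMinPos_le (Xᵀ * X) hlam_pos ⟨(b i : Fin d → ℝ), ?_, ?_⟩
        · intro h0
          have := hbnorm i
          rw [h0] at this
          simp [l2norm] at this
        · rw [hAT, ← Matrix.mulVec_mulVec, heig i, Matrix.mulVec_smul, heig i, smul_smul, sq]
      have h1 : 0 ≤ 1 - a * lam i := by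
        have : a * lam i ≤ c := le_trans (by nlinarith [hble]) hac
        linarith
      have h2 : 1 - a * lam i ≤ E := by
        calc 1 - a * lam i ≤ Real.exp (-(a * lam i)) := by
              have := Real.add_one_le_exp (-(a * lam i)); linarith
          _ ≤ E := by
              rw [hE]
              apply Real.exp_le_exp.mpr
              nlinarith [hσle]
      have h3 : (1 - a * lam i)^2 ≤ E^2 := by nlinarith
      rw [mul_pow]
      exact mul_le_mul_of_nonneg_right h3 (sq_nonneg _)
  rw [parseval b f, parseval b e]
  simp_rw [hcoord]
  calc Real.sqrt (∑ i, ((1 - a * lam i) * ((b i : Fin d → ℝ) ⬝ᵥ e))^2)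
      ≤ Real.sqrt (∑ i, E^2 * ((b i : Fin d → ℝ) ⬝ᵥ e)^2) :=
        Real.sqrt_le_sqrt (Finset.sum_le_sum fun i _ => hterm i)
    _ = E * Real.sqrt (∑ i, ((b i : Fin d → ℝ) ⬝ᵥ e)^2) := by
        rw [← Finset.mul_sum, Real.sqrt_mul (sq_nonneg E), Real.sqrt_sq hEpos.le]

end step

section sigma
variable {n d : ℕ} (X : Matrix (Fin n) (Fin d) ℝ)

lemma coords_zero {d' : ℕ} (b : OrthonormalBasis (Fin d') ℝ (EuclideanSpace ℝ (Fin d')))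
    {v : Fin d' → ℝ} (h : ∀ i, (b i : Fin d' → ℝ) ⬝ᵥ v = 0) : v = 0 := by
  apply l2norm_eq_zero
  rw [parseval b v]
  simp [h]

lemma sigma_pos_of_nonempty
    (hS : {s : ℝ | 0 < s ∧ ∃ v : Fin d → ℝ, v ≠ 0 ∧
        ((Xᵀ * X)ᵀ * (Xᵀ * X)) *ᵥ v = (s ^ 2) • v}.Nonempty) :
    0 < sigmaMinPos (Xᵀ * X) := by
  have hherm : (Xᵀ * X).IsHermitian := by simpa using isHermitian_conjTranspose_mul_self X
  set b := hherm.eigenvectorBasis with hb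
  set lam := hherm.eigenvalues with hlam
  have heig : ∀ i, (Xᵀ * X) *ᵥ (b i : Fin d → ℝ) = lam i • (b i : Fin d → ℝ) :=
    fun i => hherm.mulVec_eigenvectorBasis i
  have hsub : {s : ℝ | 0 < s ∧ ∃ v : Fin d → ℝ, v ≠ 0 ∧
      ((Xᵀ * X)ᵀ * (Xᵀ * X)) *ᵥ v = (s ^ 2) • v} ⊆ Set.range lam := by
    rintro s ⟨hs, v, hv0, hveq⟩
    rw [hAT] at hveq
    -- find a coordinate with nonzero coefficient
    have : ¬ ∀ i, (b i : Fin d → ℝ) ⬝ᵥ v = 0 := fun h => hv0 (coords_zero b h)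
    push_neg at this
    obtain ⟨i, hci⟩ := this
    have hcoord : lam i ^ 2 * ((b i : Fin d → ℝ) ⬝ᵥ v) = s ^ 2 * ((b i : Fin d → ℝ) ⬝ᵥ v) := by
      have h1 : (b i : Fin d → ℝ) ⬝ᵥ (((Xᵀ * X) * (Xᵀ * X)) *ᵥ v)
          = lam i ^ 2 * ((b i : Fin d → ℝ) ⬝ᵥ v) := by
        rw [← Matrix.mulVec_mulVec, dot_symm_A, heig i, smul_dotProduct, dot_symm_A, heig i,
          smul_dotProduct]
        simp [smul_eq_mul, sq]
        ring
      rw [hveq] at h1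
      rw [← h1, dotProduct_smul]
      simp [smul_eq_mul, mul_comm]
    have hsq : lam i ^ 2 = s ^ 2 := by
      have := mul_right_cancel₀ hci hcoord
      exact this
    have hlam_nonneg : 0 ≤ lam i := by
      have hbdot : (b i : Fin d → ℝ) ⬝ᵥ (b i : Fin d → ℝ) = 1 := by
        have hbn : l2norm (b i : Fin d → ℝ) = 1 := by
          rw [l2norm_eq]
          have : ‖b i‖ = 1 := b.orthonormal.1 i
          rw [← this]; rfl
        have h0 : (0:ℝ) ≤ ∑ j, ((b i : Fin d → ℝ) j)^2 :=
          Finset.sum_nonneg fun j _ => sq_nonneg _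
        have := congrArg (fun t => t^2) hbn
        simp only [l2norm, Real.sq_sqrt h0, one_pow] at this
        simpa [dotProduct, sq] using this
      have h1 : (b i : Fin d → ℝ) ⬝ᵥ ((Xᵀ * X) *ᵥ (b i : Fin d → ℝ)) = lam i := by
        rw [heig i, dotProduct_smul, hbdot]; simp
      rw [← h1, dot_A_self]
      exact Finset.sum_nonneg fun j _ => mul_self_nonneg _
    have : lam i = s := by nlinarith
    exact ⟨i, this⟩
  have hfin : {s : ℝ | 0 < s ∧ ∃ v : Fin d → ℝ, v ≠ 0 ∧
      ((Xᵀ * X)ᵀ * (Xᵀ * X)) *ᵥ v = (s ^ 2) • v}.Finite :=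
    (Set.finite_range lam).subset hsub
  have hmem := hS.csInf_mem hfin
  exact hmem.1

lemma X_zero_of_empty
    (hS : {s : ℝ | 0 < s ∧ ∃ v : Fin d → ℝ, v ≠ 0 ∧
        ((Xᵀ * X)ᵀ * (Xᵀ * X)) *ᵥ v = (s ^ 2) • v} = ∅) :
    ∀ v : Fin d → ℝ, X *ᵥ v = 0 := by
  have hherm : (Xᵀ * X).IsHermitian := by simpa using isHermitian_conjTranspose_mul_self X
  set b := hherm.eigenvectorBasis with hb
  set lam := hherm.eigenvalues with hlam
  have heig : ∀ i, (Xᵀ * X) *ᵥ (b i : Fin d → ℝ) = lam i • (b i : Fin d → ℝ) :=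
    fun i => hherm.mulVec_eigenvectorBasis i
  have hbnorm : ∀ i, l2norm (b i : Fin d → ℝ) = 1 := by
    intro i
    rw [l2norm_eq]
    have : ‖b i‖ = 1 := b.orthonormal.1 i
    rw [← this]; rfl
  have hbdot : ∀ i, (b i : Fin d → ℝ) ⬝ᵥ (b i : Fin d → ℝ) = 1 := by
    intro i
    have h0 : (0:ℝ) ≤ ∑ j, ((b i : Fin d → ℝ) j)^2 :=
      Finset.sum_nonneg fun j _ => sq_nonneg _
    have := congrArg (fun t => t^2) (hbnorm i)
    simp only [l2norm, Real.sq_sqrt h0, one_pow] at this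
    simpa [dotProduct, sq] using this
  have hlam_nonneg : ∀ i, 0 ≤ lam i := by
    intro i
    have h1 : (b i : Fin d → ℝ) ⬝ᵥ ((Xᵀ * X) *ᵥ (b i : Fin d → ℝ)) = lam i := by
      rw [heig i, dotProduct_smul, hbdot i]; simp
    rw [← h1, dot_A_self]
    exact Finset.sum_nonneg fun j _ => mul_self_nonneg _
  have hlam0 : ∀ i, lam i = 0 := by
    intro i
    by_contra hne
    have hpos : 0 < lam i := lt_of_le_of_ne (hlam_nonneg i) (Ne.symm hne)
    have : lam i ∈ {s : ℝ | 0 < s ∧ ∃ v : Fin d → ℝ, v ≠ 0 ∧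
        ((Xᵀ * X)ᵀ * (Xᵀ * X)) *ᵥ v = (s ^ 2) • v} := by
      refine ⟨hpos, (b i : Fin d → ℝ), ?_, ?_⟩
      · intro h0
        have := hbnorm i
        rw [h0] at this
        simp [l2norm] at this
      · rw [hAT, ← Matrix.mulVec_mulVec, heig i, Matrix.mulVec_smul, heig i, smul_smul, sq]
    rw [hS] at this
    exact this
  intro v
  apply ker_of_A
  apply coords_zero b
  intro i
  rw [dot_symm_A, heig i, smul_dotProduct]
  simp [hlam0 i]

end sigma

lemma dot_mulVec_left {m' n' : ℕ} (M : Matrix (Fin m') (Fin n') ℝ) (u : Fin n' → ℝ)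
    (v : Fin m' → ℝ) : (M *ᵥ u) ⬝ᵥ v = u ⬝ᵥ (Mᵀ *ᵥ v) := by
  rw [dotProduct_comm, Matrix.dotProduct_mulVec, Matrix.mulVec_transpose, dotProduct_comm]

theorem main_thm_aux {n d : ℕ}
    (X : Matrix (Fin n) (Fin d) ℝ) (Y : Fin n → ℝ)
    (Xp : Matrix (Fin d) (Fin n) ℝ) (hXp : IsMoorePenrose X Xp)
    (α : ℕ → ℝ) (hαpos : ∀ k, 0 < α k)
    (hsup : ∃ c : ℝ, c < 1 ∧ ∀ k, α k * specNorm (Xᵀ * X) ≤ c)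
    (w : ℕ → Fin d → ℝ)
    (hw1 : perpKer X (w 1))
    (hrec : ∀ k, 1 ≤ k →
      w (k + 1) = ((1 : Matrix (Fin d) (Fin d) ℝ) - α k • (Xᵀ * X)) *ᵥ w k
        + α k • (Xᵀ *ᵥ Y)) :
    (∀ k, 1 ≤ k →
      l2norm (w (k + 1) - Xp *ᵥ Y)
        ≤ Real.exp (-(sigmaMinPos (Xᵀ * X)) * ∑ ℓ ∈ Finset.Icc 1 k, α ℓ)
            * l2norm (w 1 - Xp *ᵥ Y))
    ∧ (Tendsto (fun k => ∑ ℓ ∈ Finset.Icc 1 k, α ℓ) atTop atTop →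
        Tendsto (fun k => l2norm (w k - Xp *ᵥ Y)) atTop (nhds 0)) := by
  obtain ⟨c, hc, hsc⟩ := hsup
  obtain ⟨h1, h2, h3, h4⟩ := hXp
  set σ := sigmaMinPos (Xᵀ * X) with hσ
  set u := Xp *ᵥ Y with hudef
  -- (XᵀX) Xp = Xᵀ
  have hXXp : (Xᵀ * X) * Xp = Xᵀ := by
    rw [Matrix.mul_assoc, ← h3, ← Matrix.transpose_mul, h1]
  have hu : (Xᵀ * X) *ᵥ u = Xᵀ *ᵥ Y := by
    rw [hudef, Matrix.mulVec_mulVec, hXXp]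
  -- u ⊥ ker X
  have hperpu : perpKer X u := by
    intro v hv
    have hXpXv : (Xp * X) *ᵥ v = 0 := by
      rw [← Matrix.mulVec_mulVec, hv, Matrix.mulVec_zero]
    have hrepr : u = (Xp * X) *ᵥ u := by
      rw [hudef, Matrix.mulVec_mulVec, h2]
    rw [hrepr, dot_mulVec_left, h4, hXpXv, dotProduct_zero]
  have hperp1 : perpKer X (w 1 - u) := by
    intro v hv
    rw [sub_dotProduct, hw1 v hv, hperpu v hv, sub_zero]
  -- error recurrence
  have herec : ∀ k, 1 ≤ k →
      w (k + 1) - u = ((1 : Matrix (Fin d) (Fin d) ℝ) - α k • (Xᵀ * X)) *ᵥ (w k - u) := by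
    intro k hk
    rw [hrec k hk]
    simp only [Matrix.mulVec_sub, Matrix.sub_mulVec, Matrix.one_mulVec,
      Matrix.smul_mulVec, hu]
    abel
  -- main bound by induction
  have main : ∀ k, 1 ≤ k → perpKer X (w (k + 1) - u) ∧
      l2norm (w (k + 1) - u)
        ≤ Real.exp (-σ * ∑ ℓ ∈ Finset.Icc 1 k, α ℓ) * l2norm (w 1 - u) := by
    intro k hk
    induction k, hk using Nat.le_induction with
    | base =>
      rw [herec 1 le_rfl]
      refine ⟨perp_step X hperp1, ?_⟩
      simpa using key_step X (hαpos 1) hc (hsc 1) hperp1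
    | succ k hk ih =>
      rw [herec (k + 1) (by omega)]
      refine ⟨perp_step X ih.1, ?_⟩
      calc l2norm (((1 : Matrix (Fin d) (Fin d) ℝ) - α (k+1) • (Xᵀ * X)) *ᵥ (w (k+1) - u))
          ≤ Real.exp (-σ * α (k + 1)) * l2norm (w (k + 1) - u) :=
            key_step X (hαpos (k + 1)) hc (hsc (k + 1)) ih.1
        _ ≤ Real.exp (-σ * α (k + 1)) *
              (Real.exp (-σ * ∑ ℓ ∈ Finset.Icc 1 k, α ℓ) * l2norm (w 1 - u)) :=
            mul_le_mul_of_nonneg_left ih.2 (Real.exp_pos _).le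
        _ = Real.exp (-σ * ∑ ℓ ∈ Finset.Icc 1 (k + 1), α ℓ) * l2norm (w 1 - u) := by
            rw [Finset.sum_Icc_succ_top (by omega : 1 ≤ k + 1), ← mul_assoc, ← Real.exp_add]
            ring_nf
  refine ⟨fun k hk => (main k hk).2, ?_⟩
  intro hsum
  by_cases hS : {s : ℝ | 0 < s ∧ ∃ v : Fin d → ℝ, v ≠ 0 ∧
      ((Xᵀ * X)ᵀ * (Xᵀ * X)) *ᵥ v = (s ^ 2) • v}.Nonempty
  · -- σ > 0, squeeze
    have hσpos : 0 < σ := sigma_pos_of_nonempty X hS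
    have hg : Tendsto (fun k : ℕ =>
        Real.exp (-σ * ∑ ℓ ∈ Finset.Icc 1 k, α ℓ) * l2norm (w 1 - u)) atTop (nhds 0) := by
      have h1 : Tendsto (fun k : ℕ => -σ * ∑ ℓ ∈ Finset.Icc 1 k, α ℓ) atTop atBot := by
        have h2 := hsum.const_mul_atTop hσpos
        have h3 := tendsto_neg_atTop_atBot.comp h2
        simpa [Function.comp_def, neg_mul] using h3
      simpa using (Real.tendsto_exp_atBot.comp h1).mul_const (l2norm (w 1 - u))
    have hg' : Tendsto (fun k : ℕ =>
        Real.exp (-σ * ∑ ℓ ∈ Finset.Icc 1 (k - 1), α ℓ) * l2norm (w 1 - u))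
        atTop (nhds 0) := hg.comp (tendsto_sub_atTop_nat 1)
    refine squeeze_zero' ?_ ?_ hg'
    · filter_upwards with k using l2norm_nonneg _
    · filter_upwards [eventually_ge_atTop 2] with k hk
      have hk1 : (1 : ℕ) ≤ k - 1 := by omega
      have := (main (k - 1) hk1).2
      rwa [Nat.sub_add_cancel (by omega : 1 ≤ k)] at this
  · -- X = 0 case
    rw [Set.not_nonempty_iff_eq_empty] at hS
    have hX0 : ∀ v : Fin d → ℝ, X *ᵥ v = 0 := X_zero_of_empty X hS
    have he1 : w 1 - u = 0 := by
      have := hperp1 (w 1 - u) (hX0 _)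
      exact dotProduct_self_eq_zero.mp this
    have hek : ∀ k, 1 ≤ k → w k - u = 0 := by
      intro k hk
      induction k, hk using Nat.le_induction with
      | base => exact he1
      | succ k hk ih => rw [herec k hk, ih, Matrix.mulVec_zero]
    have hev : ∀ᶠ k in atTop, l2norm (w k - u) = (0 : ℝ) := by
      filter_upwards [eventually_ge_atTop 1] with k hk
      rw [hek k hk]
      simp [l2norm]
    exact Tendsto.congr' (hev.mono fun k hk => hk.symm) tendsto_const_nhds

/-- Lemma 1 / convergence of noiseless gradient descent.
If `w₁ ⊥ ker X` and `sup_ℓ α_ℓ‖XᵀX‖ < 1`, the gradient descent iterates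
`w_{k+1} = (I - α_k XᵀX) w_k + α_k Xᵀ Y` converge to the minimum-norm
least squares solution `X⁺Y` at an exponential rate; in particular they
converge whenever `∑ α_ℓ = ∞`. -/
theorem randomly_weighted_gd_stmt0 {n d : ℕ}
    (X : Matrix (Fin n) (Fin d) ℝ) (Y : Fin n → ℝ)
    (Xp : Matrix (Fin d) (Fin n) ℝ) (hXp : IsMoorePenrose X Xp)
    (α : ℕ → ℝ) (hαpos : ∀ k, 0 < α k)
    (hsup : ∃ c : ℝ, c < 1 ∧ ∀ k, α k * specNorm (Xᵀ * X) ≤ c)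
    (w : ℕ → Fin d → ℝ)
    (hw1 : perpKer X (w 1))
    (hrec : ∀ k, 1 ≤ k →
      w (k + 1) = ((1 : Matrix (Fin d) (Fin d) ℝ) - α k • (Xᵀ * X)) *ᵥ w k
        + α k • (Xᵀ *ᵥ Y)) :
    (∀ k, 1 ≤ k →
      l2norm (w (k + 1) - Xp *ᵥ Y)
        ≤ Real.exp (-(sigmaMinPos (Xᵀ * X)) * ∑ ℓ ∈ Finset.Icc 1 k, α ℓ)
            * l2norm (w 1 - Xp *ᵥ Y))
    ∧ (Tendsto (fun k => ∑ ℓ ∈ Finset.Icc 1 k, α ℓ) atTop atTop →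
        Tendsto (fun k => l2norm (w k - Xp *ᵥ Y)) atTop (nhds 0)) := by
  exact main_thm_aux X Y Xp hXp α hαpos hsup w hw1 hrec
end
end

section
/- Let X be an n×d real matrix, Y ∈ ℝⁿ, and let D₁, D₂, … be i.i.d. copies of a random n×n diagonal matrix D with finite fourth moments and M₂ = E[D²] non-singular. Define 𝕏̂ = Xᵀ M₂ X, the weighted minimum-norm solution ŵ = (M₂^{1/2}X)⁺ (M₂^{1/2}Y), and the randomly weighted gradient descent iterates ŵ_{k+1} = (I − α_k · Xᵀ D_k² X) ŵ_k + α_k · Xᵀ D_k² Y with step-sizes α_k > 0, where ŵ₁ is independent of the D_k. Then for every k ≥ 1, E[ŵ_{k+1} − ŵ] = (I − α_k · 𝕏̂) E[ŵ_k − ŵ], where the expectation is over the sequence of weighting matrices. -/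
open Matrix MeasureTheory ProbabilityTheory Filter
open scoped BigOperators

noncomputable section

lemma aux_indep_mono {Ω : Type*} {mΩ : MeasurableSpace Ω} {μ : Measure Ω}
    {m1 m2 m1' m2' : MeasurableSpace Ω}
    (h : Indep m1 m2 μ) (h1 : m1' ≤ m1) (h2 : m2' ≤ m2) : Indep m1' m2' μ := by
  rw [Indep_iff] at h ⊢
  exact fun t1 t2 ht1 ht2 => h t1 t2 (h1 _ ht1) (h2 _ ht2)

lemma aux_indep_sup {Ω : Type*} {mΩ : MeasurableSpace Ω} {μ : Measure Ω}
    [IsProbabilityMeasure μ] {m1 m2 m3 : MeasurableSpace Ω}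
    (h1 : m1 ≤ mΩ) (h2 : m2 ≤ mΩ) (h3 : m3 ≤ mΩ)
    (h123 : Indep m1 (m2 ⊔ m3) μ) (h23 : Indep m2 m3 μ) :
    Indep (m1 ⊔ m2) m3 μ := by
  have h12 : Indep m1 m2 μ := aux_indep_mono h123 le_rfl le_sup_left
  set p1 : Set (Set Ω) :=
    {u | ∃ s t, MeasurableSet[m1] s ∧ MeasurableSet[m2] t ∧ u = s ∩ t} with hp1def
  set p2 : Set (Set Ω) := {u | MeasurableSet[m3] u} with hp2def
  have hp1 : IsPiSystem p1 := by
    rintro u ⟨s, t, hs, ht, rfl⟩ u' ⟨s', t', hs', ht', rfl⟩ -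
    exact ⟨s ∩ s', t ∩ t', hs.inter hs', ht.inter ht', by
      rw [Set.inter_inter_inter_comm]⟩
  have hp2 : IsPiSystem p2 := fun u hu u' hu' _ => hu.inter hu'
  have hgen1 : m1 ⊔ m2 = MeasurableSpace.generateFrom p1 := by
    refine le_antisymm (sup_le ?_ ?_) (MeasurableSpace.generateFrom_le ?_)
    · exact fun s hs => MeasurableSpace.measurableSet_generateFrom
        ⟨s, Set.univ, hs, MeasurableSet.univ, (Set.inter_univ s).symm⟩
    · exact fun t ht => MeasurableSpace.measurableSet_generateFrom
        ⟨Set.univ, t, MeasurableSet.univ, ht, (Set.univ_inter t).symm⟩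
    · rintro u ⟨s, t, hs, ht, rfl⟩
      exact ((le_sup_left : m1 ≤ m1 ⊔ m2) s hs).inter ((le_sup_right : m2 ≤ m1 ⊔ m2) t ht)
  have hgen2 : m3 = MeasurableSpace.generateFrom p2 :=
    le_antisymm (fun u hu => MeasurableSpace.measurableSet_generateFrom hu)
      (MeasurableSpace.generateFrom_le fun u hu => hu)
  refine IndepSets.indep (sup_le h1 h2) h3 hp1 hp2 hgen1 hgen2 ?_
  rw [IndepSets_iff]
  rintro u v ⟨s, t, hs, ht, rfl⟩ hv
  rw [Indep_iff] at h123 h23 h12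
  have htv : MeasurableSet[m2 ⊔ m3] (t ∩ v) :=
    ((le_sup_left : m2 ≤ m2 ⊔ m3) t ht).inter ((le_sup_right : m3 ≤ m2 ⊔ m3) v hv)
  calc μ (s ∩ t ∩ v) = μ (s ∩ (t ∩ v)) := by rw [Set.inter_assoc]
    _ = μ s * μ (t ∩ v) := h123 _ _ hs htv
    _ = μ s * (μ t * μ v) := by rw [h23 t v ht hv]
    _ = μ s * μ t * μ v := (mul_assoc _ _ _).symm
    _ = μ (s ∩ t) * μ v := by rw [h12 s t hs ht]

lemma aux_comap_prod {Ω δ ε : Type*} [MeasurableSpace Ω]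
    [mδ : MeasurableSpace δ] [mε : MeasurableSpace ε] (u : Ω → δ) (v : Ω → ε) :
    MeasurableSpace.comap (fun ω => (u ω, v ω)) Prod.instMeasurableSpace
      = MeasurableSpace.comap u mδ ⊔ MeasurableSpace.comap v mε := by
  rw [show (Prod.instMeasurableSpace : MeasurableSpace (δ × ε))
      = mδ.comap Prod.fst ⊔ mε.comap Prod.snd from rfl, MeasurableSpace.comap_sup,
    MeasurableSpace.comap_comp, MeasurableSpace.comap_comp]
  rfl

lemma aux_indepFun_pair {Ω α β γ : Type*} [MeasurableSpace Ω] {μ : Measure Ω}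
    [IsProbabilityMeasure μ]
    [MeasurableSpace α] [MeasurableSpace β] [MeasurableSpace γ]
    {f : Ω → α} {g : Ω → β} {h : Ω → γ}
    (hf : Measurable f) (hg : Measurable g) (hh : Measurable h)
    (h1 : IndepFun f (fun ω => (g ω, h ω)) μ) (h2 : IndepFun g h μ) :
    IndepFun (fun ω => (f ω, g ω)) h μ := by
  rw [IndepFun_iff_Indep] at h1 h2 ⊢
  rw [aux_comap_prod g h] at h1
  rw [aux_comap_prod f g]
  exact aux_indep_sup hf.comap_le hg.comap_le hh.comap_le h1 h2


/-- marginalized dynamics, recursion for the first moment.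
For randomly weighted gradient descent with i.i.d. diagonal weightings `D_k`
(given by their diagonal entries) with finite fourth moments, `M₂ = E[D²]`
non-singular, `𝕏̂ = XᵀM₂X` and `ŵ = (M₂^{1/2}X)⁺(M₂^{1/2}Y)`, the expectations
satisfy `E[ŵ_{k+1} - ŵ] = (I - α_k 𝕏̂) E[ŵ_k - ŵ]`. -/
theorem randomly_weighted_gd_stmt4 {n d : ℕ}
    {Ω : Type*} [MeasurableSpace Ω] (μ : Measure Ω) [IsProbabilityMeasure μ]
    (X : Matrix (Fin n) (Fin d) ℝ) (Y : Fin n → ℝ)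
    (D : ℕ → Ω → Fin n → ℝ) (hDmeas : ∀ k, Measurable (D k))
    (hDindep : iIndepFun D μ)
    (hDident : ∀ k, IdentDistrib (D k) (D 0) μ μ)
    (hmom : ∀ i, ∀ p : ℕ, p ≤ 4 → Integrable (fun ω => (D 0 ω i) ^ p) μ)
    (M2 : Matrix (Fin n) (Fin n) ℝ)
    (hM2 : M2 = Matrix.diagonal fun i => ∫ ω, (D 0 ω i) ^ 2 ∂μ)
    (hM2unit : IsUnit M2.det)
    (Rh : Matrix (Fin n) (Fin n) ℝ)
    (hRh : Rh = Matrix.diagonal fun i => Real.sqrt (∫ ω, (D 0 ω i) ^ 2 ∂μ))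
    (Xhp : Matrix (Fin d) (Fin n) ℝ) (hXhp : IsMoorePenrose (Rh * X) Xhp)
    (what : Fin d → ℝ) (hwhat : what = Xhp *ᵥ (Rh *ᵥ Y))
    (α : ℕ → ℝ) (hαpos : ∀ k, 0 < α k)
    (w1 : Ω → Fin d → ℝ) (hw1meas : Measurable w1)
    (hw1int : ∀ i, Integrable (fun ω => w1 ω i) μ)
    (hw1indep : IndepFun w1 (fun ω k => D k ω) μ)
    (w : ℕ → Ω → Fin d → ℝ) (hinit : w 1 = w1)
    (hrec : ∀ k, 1 ≤ k → ∀ ω,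
      w (k + 1) ω = ((1 : Matrix (Fin d) (Fin d) ℝ)
          - α k • (Xᵀ * Matrix.diagonal (fun i => (D k ω i) ^ 2) * X)) *ᵥ w k ω
        + α k • ((Xᵀ * Matrix.diagonal (fun i => (D k ω i) ^ 2)) *ᵥ Y)) :
    ∀ k, 1 ≤ k →
      vecExp μ (fun ω => w (k + 1) ω - what)
        = ((1 : Matrix (Fin d) (Fin d) ℝ) - α k • (Xᵀ * M2 * X)) *ᵥ
            vecExp μ (fun ω => w k ω - what) := by
  classical
  set m2 : Fin n → ℝ := fun i => ∫ ω, (D 0 ω i) ^ 2 ∂μ with hm2def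
  have hm2i : ∀ i, m2 i = ∫ ω, (D 0 ω i) ^ 2 ∂μ := fun i => rfl
  -- matrix entrywise helpers
  have hXv : ∀ (v : Fin d → ℝ) (i : Fin n), (X *ᵥ v) i = ∑ m, X i m * v m := fun v i => rfl
  have hmv1 : ∀ (Dv u : Fin n → ℝ) (j : Fin d),
      ((Xᵀ * Matrix.diagonal Dv) *ᵥ u) j = ∑ i, X i j * (Dv i * u i) := by
    intro Dv u j
    rw [← Matrix.mulVec_mulVec]
    calc (Xᵀ *ᵥ (Matrix.diagonal Dv *ᵥ u)) j
        = ∑ i, Xᵀ j i * (Matrix.diagonal Dv *ᵥ u) i := rfl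
      _ = ∑ i, X i j * (Dv i * u i) := Finset.sum_congr rfl fun i _ => by
            rw [Matrix.mulVec_diagonal, Matrix.transpose_apply]
  have hmv2 : ∀ (Dv : Fin n → ℝ) (v : Fin d → ℝ) (j : Fin d),
      ((Xᵀ * Matrix.diagonal Dv * X) *ᵥ v) j = ∑ i, X i j * (Dv i * ∑ m, X i m * v m) := by
    intro Dv v j
    rw [← Matrix.mulVec_mulVec, hmv1]
    exact Finset.sum_congr rfl fun i _ => by rw [hXv]
  have hkey : ∀ (a : ℝ) (Dv : Fin n → ℝ) (wv : Fin d → ℝ) (j : Fin d),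
      (((1 : Matrix (Fin d) (Fin d) ℝ) - a • (Xᵀ * Matrix.diagonal Dv * X)) *ᵥ wv
        + a • ((Xᵀ * Matrix.diagonal Dv) *ᵥ Y)) j
      = wv j + a * ∑ i, X i j * (Dv i * (Y i - ∑ m, X i m * wv m)) := by
    intro a Dv wv j
    simp only [Pi.add_apply, Matrix.sub_mulVec, Matrix.one_mulVec, Matrix.smul_mulVec,
      Pi.sub_apply, Pi.smul_apply, smul_eq_mul]
    rw [hmv1, hmv2]
    rw [show ∑ i, X i j * (Dv i * (Y i - ∑ m, X i m * wv m))
        = (∑ i, X i j * (Dv i * Y i)) - ∑ i, X i j * (Dv i * ∑ m, X i m * wv m) by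
      rw [← Finset.sum_sub_distrib]; exact Finset.sum_congr rfl fun i _ => by ring]
    ring
  have hrec' : ∀ k, 1 ≤ k → ∀ ω (j : Fin d),
      w (k + 1) ω j = w k ω j
        + α k * ∑ i, X i j * ((D k ω i) ^ 2 * (Y i - ∑ m, X i m * w k ω m)) := by
    intro k hk ω j
    rw [hrec k hk ω]
    exact hkey (α k) _ _ j
  -- measurability of the D-vector map
  have hDvecmeas : ∀ k : ℕ, Measurable (fun ω (j : Fin k) => D (j : ℕ) ω) :=
    fun k => measurable_pi_lambda _ fun j => hDmeas _
  -- pair independence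
  have pairIndep : ∀ k : ℕ,
      IndepFun (fun ω => (w1 ω, fun j : Fin k => D (j : ℕ) ω)) (D k) μ := by
    intro k
    refine aux_indepFun_pair hw1meas (hDvecmeas k) (hDmeas k) ?_ ?_
    · have hφ : Measurable (fun p : ℕ → Fin n → ℝ => ((fun j : Fin k => p (j : ℕ)), p k)) :=
        (measurable_pi_lambda _ fun j => measurable_pi_apply _).prodMk (measurable_pi_apply _)
      exact hw1indep.comp measurable_id hφ
    · have h := hDindep.indepFun_finset (Finset.range k) {k}
        (by simp [Finset.disjoint_singleton_right]) hDmeas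
      have hφ : Measurable (fun v : ((i : (Finset.range k : Finset ℕ)) → Fin n → ℝ) =>
          fun j : Fin k => v ⟨(j : ℕ), Finset.mem_range.2 j.isLt⟩) :=
        measurable_pi_lambda _ fun j => measurable_pi_apply _
      have hψ : Measurable (fun v : ((i : ({k} : Finset ℕ)) → Fin n → ℝ) =>
          v ⟨k, Finset.mem_singleton_self k⟩) := measurable_pi_apply _
      exact h.comp hφ hψ
  -- representation of w k
  have hWrep : ∀ k : ℕ, 1 ≤ k → ∃ F : (Fin d → ℝ) × (Fin k → Fin n → ℝ) → (Fin d → ℝ),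
      Measurable F ∧ ∀ ω, w k ω = F (w1 ω, fun j : Fin k => D (j : ℕ) ω) := by
    intro k hk
    induction k, hk using Nat.le_induction with
    | base => exact ⟨Prod.fst, measurable_fst, fun ω => by rw [hinit]⟩
    | succ k hk ih =>
      obtain ⟨F, hF, hFw⟩ := ih
      set F2 : (Fin d → ℝ) × (Fin (k + 1) → Fin n → ℝ) → Fin d → ℝ :=
        fun p => F (p.1, fun j : Fin k => p.2 j.castSucc) with hF2def
      have hF2 : Measurable F2 :=
        hF.comp (measurable_fst.prodMk (measurable_pi_lambda _ fun j =>
          (measurable_pi_apply _).comp measurable_snd))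
      have hF2e : ∀ m, Measurable fun p => F2 p m := fun m => (measurable_pi_apply m).comp hF2
      have hDe : ∀ i, Measurable
          fun p : (Fin d → ℝ) × (Fin (k + 1) → Fin n → ℝ) => p.2 (Fin.last k) i :=
        fun i => (measurable_pi_apply i).comp ((measurable_pi_apply (Fin.last k)).comp
          measurable_snd)
      refine ⟨fun p j0 => F2 p j0 + α k * ∑ i, X i j0 *
          ((p.2 (Fin.last k) i) ^ 2 * (Y i - ∑ m, X i m * F2 p m)), ?_, ?_⟩
      · refine measurable_pi_lambda _ fun j0 => ?_
        refine (hF2e j0).add (measurable_const.mul ?_)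
        refine Finset.measurable_sum _ fun i _ => measurable_const.mul ?_
        exact ((hDe i).pow_const 2).mul (measurable_const.sub
          (Finset.measurable_sum _ fun m _ => measurable_const.mul (hF2e m)))
      · intro ω
        funext j0
        rw [hrec' k hk ω j0]
        simp only [hF2def, Fin.coe_castSucc, Fin.val_last]
        rw [← hFw ω]
  have hWmeas : ∀ k, 1 ≤ k → Measurable (w k) := by
    intro k hk
    obtain ⟨F, hF, hFw⟩ := hWrep k hk
    have h : w k = fun ω => F (w1 ω, fun j : Fin k => D (j : ℕ) ω) := funext hFw
    rw [h]
    exact hF.comp (hw1meas.prodMk (hDvecmeas k))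
  have hWD : ∀ k, 1 ≤ k → IndepFun (w k) (D k) μ := by
    intro k hk
    obtain ⟨F, hF, hFw⟩ := hWrep k hk
    have h := (pairIndep k).comp hF measurable_id
    have heq : (F ∘ fun ω => (w1 ω, fun j : Fin k => D (j : ℕ) ω)) = w k :=
      funext fun ω => (hFw ω).symm
    rw [heq, Function.id_comp] at h
    exact h
  -- moments of D
  have hD2ident : ∀ k i, IdentDistrib (fun ω => (D k ω i) ^ 2) (fun ω => (D 0 ω i) ^ 2) μ μ :=
    fun k i => (hDident k).comp ((measurable_pi_apply i).pow_const 2)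
  have hD2int : ∀ k i, Integrable (fun ω => (D k ω i) ^ 2) μ :=
    fun k i => (hD2ident k i).integrable_iff.2 (hmom i 2 (by norm_num))
  have hD2val : ∀ k i, ∫ ω, (D k ω i) ^ 2 ∂μ = m2 i :=
    fun k i => ((hD2ident k i).integral_eq).trans (hm2i i).symm
  -- integrability of the iterates
  have hWint : ∀ k, 1 ≤ k → ∀ m, Integrable (fun ω => w k ω m) μ := by
    intro k hk
    induction k, hk using Nat.le_induction with
    | base => intro m; rw [hinit]; exact hw1int m
    | succ k hk ih =>
      intro j
      have hqint : ∀ i, Integrable (fun ω => (D k ω i) ^ 2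
          * (Y i - ∑ m, X i m * w k ω m)) μ := by
        intro i
        have hind : IndepFun (fun ω => (D k ω i) ^ 2)
            (fun ω => Y i - ∑ m, X i m * w k ω m) μ :=
          (hWD k hk).symm.comp ((measurable_pi_apply i).pow_const 2)
            (measurable_const.sub (Finset.measurable_sum _ fun m _ =>
              (measurable_pi_apply m).const_mul _))
        exact hind.integrable_mul (hD2int k i)
          ((integrable_const _).sub (integrable_finset_sum _ fun m _ => (ih m).const_mul _))
      have h : (fun ω => w (k + 1) ω j) = fun ω => w k ω j
          + α k * ∑ i, X i j * ((D k ω i) ^ 2 * (Y i - ∑ m, X i m * w k ω m)) :=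
        funext fun ω => hrec' k hk ω j
      rw [h]
      exact (ih j).add ((integrable_finset_sum _ fun i _ =>
        (hqint i).const_mul _).const_mul _)
  -- the normal equation
  have hRhsq : Rh * Rh = M2 := by
    rw [hRh, hM2, Matrix.diagonal_mul_diagonal]
    refine congrArg Matrix.diagonal (funext fun i => ?_)
    exact Real.mul_self_sqrt (integral_nonneg fun ω => sq_nonneg _)
  have hT : (Rh * X)ᵀ = Xᵀ * Rh := by
    rw [Matrix.transpose_mul, hRh, Matrix.diagonal_transpose]
  have hP : (Rh * X)ᵀ * ((Rh * X) * Xhp) = (Rh * X)ᵀ := by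
    obtain ⟨p1, p2, p3, p4⟩ := hXhp
    calc (Rh * X)ᵀ * ((Rh * X) * Xhp) = (Rh * X)ᵀ * ((Rh * X) * Xhp)ᵀ := by rw [p3]
      _ = (((Rh * X) * Xhp) * (Rh * X))ᵀ := by rw [← Matrix.transpose_mul]
      _ = (Rh * X)ᵀ := by rw [show (Rh * X) * Xhp * (Rh * X) = Rh * X from p1]
  have hXM2 : Xᵀ * M2 = (Rh * X)ᵀ * Rh := by
    rw [hT, ← hRhsq, Matrix.mul_assoc]
  have hXMX : Xᵀ * M2 * X = (Rh * X)ᵀ * (Rh * X) := by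
    rw [hT, ← hRhsq]
    simp only [Matrix.mul_assoc]
  have hmat : (Xᵀ * M2) *ᵥ Y = (Xᵀ * M2 * X) *ᵥ what := by
    calc (Xᵀ * M2) *ᵥ Y = ((Rh * X)ᵀ * Rh) *ᵥ Y := by rw [hXM2]
      _ = ((Rh * X)ᵀ * ((Rh * X) * Xhp) * Rh) *ᵥ Y := by rw [hP]
      _ = (Xᵀ * M2 * X) *ᵥ (Xhp *ᵥ (Rh *ᵥ Y)) := by
            rw [Matrix.mulVec_mulVec, Matrix.mulVec_mulVec, hXMX]
            simp only [Matrix.mul_assoc]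
      _ = (Xᵀ * M2 * X) *ᵥ what := by rw [hwhat]
  have hNE : ∀ j, ∑ i, X i j * (m2 i * (Y i - ∑ m, X i m * what m)) = 0 := by
    intro j
    have h1 := congrFun hmat j
    rw [hM2] at h1
    rw [hmv1 m2 Y j, hmv2 m2 what j] at h1
    rw [show ∑ i, X i j * (m2 i * (Y i - ∑ m, X i m * what m))
        = (∑ i, X i j * (m2 i * Y i)) - ∑ i, X i j * (m2 i * ∑ m, X i m * what m) from by
      rw [← Finset.sum_sub_distrib]; exact Finset.sum_congr rfl fun i _ => by ring]
    rw [h1, sub_self]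
  -- the final computation
  intro k hk
  have hWk := hWint k hk
  set q : Fin n → Ω → ℝ := fun i ω => Y i - ∑ m, X i m * w k ω m with hqdef
  have hq_int : ∀ i, Integrable (q i) μ := fun i =>
    (integrable_const _).sub (integrable_finset_sum _ fun m _ => (hWk m).const_mul _)
  have hq_indep : ∀ i, IndepFun (fun ω => (D k ω i) ^ 2) (q i) μ := fun i =>
    (hWD k hk).symm.comp ((measurable_pi_apply i).pow_const 2)
      (measurable_const.sub (Finset.measurable_sum _ fun m _ =>
        (measurable_pi_apply m).const_mul _))
  have hprod_int : ∀ i, Integrable (fun ω => (D k ω i) ^ 2 * q i ω) μ := fun i =>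
    (hq_indep i).integrable_mul (hD2int k i) (hq_int i)
  have hprod_val : ∀ i, ∫ ω, (D k ω i) ^ 2 * q i ω ∂μ = m2 i * ∫ ω, q i ω ∂μ := by
    intro i
    have h := (hq_indep i).integral_fun_mul_eq_mul_integral (hD2int k i).aestronglyMeasurable
      (hq_int i).aestronglyMeasurable
    rw [hD2val k i] at h
    exact h
  have hq_val : ∀ i, ∫ ω, q i ω ∂μ = Y i - ∑ m, X i m * ∫ ω, w k ω m ∂μ := by
    intro i
    have hsum : Integrable (fun ω => ∑ m, X i m * w k ω m) μ :=
      integrable_finset_sum _ fun m _ => (hWk m).const_mul _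
    rw [show (∫ ω, q i ω ∂μ) = ∫ ω, Y i - ∑ m, X i m * w k ω m ∂μ from rfl]
    rw [integral_sub (integrable_const _) hsum,
      integral_const, integral_finset_sum _ (fun m _ => (hWk m).const_mul _)]
    simp [measure_univ, integral_const_mul]
  have hE : ∀ m, vecExp μ (fun ω => w k ω - what) m = (∫ ω, w k ω m ∂μ) - what m := by
    intro m
    simp only [vecExp, Pi.sub_apply]
    rw [integral_sub (hWk m) (integrable_const _), integral_const]
    simp [measure_univ]
  have hRHS : ∀ (v : Fin d → ℝ) (j : Fin d),
      (((1 : Matrix (Fin d) (Fin d) ℝ) - α k • (Xᵀ * M2 * X)) *ᵥ v) j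
        = v j - α k * ∑ i, X i j * (m2 i * ∑ m, X i m * v m) := by
    intro v j
    simp only [Matrix.sub_mulVec, Matrix.one_mulVec, Matrix.smul_mulVec,
      Pi.sub_apply, Pi.smul_apply, smul_eq_mul]
    rw [hM2, hmv2]
  have hLHS : ∀ j : Fin d, (∫ ω, (w (k + 1) ω j - what j) ∂μ)
      = ((∫ ω, w k ω j ∂μ) - what j)
        + α k * ∑ i, X i j * (m2 i * (Y i - ∑ m, X i m * ∫ ω, w k ω m ∂μ)) := by
    intro j
    have hptw : (fun ω => w (k + 1) ω j - what j)
        = fun ω => (w k ω j - what j) + α k * ∑ i, X i j * ((D k ω i) ^ 2 * q i ω) := by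
      funext ω
      rw [hrec' k hk ω j]
      simp only [hqdef]
      ring
    have hint1 : Integrable (fun ω => w k ω j - what j) μ :=
      (hWk j).sub (integrable_const _)
    have hint2i : ∀ i : Fin n, Integrable (fun ω => X i j * ((D k ω i) ^ 2 * q i ω)) μ :=
      fun i => (hprod_int i).const_mul _
    have hint2 : Integrable (fun ω => α k * ∑ i, X i j * ((D k ω i) ^ 2 * q i ω)) μ :=
      (integrable_finset_sum _ fun i _ => hint2i i).const_mul _
    rw [hptw, integral_add hint1 hint2,
      integral_sub (hWk j) (integrable_const _), integral_const, integral_const_mul,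
      integral_finset_sum _ (fun i _ => hint2i i)]
    simp only [integral_const_mul, hprod_val, hq_val, measure_univ, ENNReal.toReal_one,
      one_smul, probReal_univ]
  funext j
  rw [hRHS (vecExp μ fun ω => w k ω - what) j]
  simp only [hE]
  have hL' : vecExp μ (fun ω => w (k + 1) ω - what) j
      = ∫ ω, (w (k + 1) ω j - what j) ∂μ := by
    simp only [vecExp, Pi.sub_apply]
  rw [hL', hLHS j]
  have hsub : ∀ i, ∑ m, X i m * ((∫ ω, w k ω m ∂μ) - what m)
      = (∑ m, X i m * ∫ ω, w k ω m ∂μ) - ∑ m, X i m * what m := by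
    intro i
    rw [← Finset.sum_sub_distrib]
    exact Finset.sum_congr rfl fun m _ => by ring
  have hsplit : ∑ i, X i j * (m2 i * (Y i - ∑ m, X i m * ∫ ω, w k ω m ∂μ))
      = ∑ i, X i j * (m2 i * (Y i - ∑ m, X i m * what m))
        - ∑ i, X i j * (m2 i * ∑ m, X i m * ((∫ ω, w k ω m ∂μ) - what m)) := by
    rw [← Finset.sum_sub_distrib]
    refine Finset.sum_congr rfl fun i _ => ?_
    rw [hsub i]
    ring
  rw [hsplit, hNE j]
  ring
end
end
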